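/- Define the polynomial D_{r,n}(t) = Σ_{k=0}^{n} d(r,n,k) t^k, where d(r,n,k) counts π ∈ G_{r,n} with exc_A(π) = k. Then for n ≥ 1, D_{r,n}(t) = (rn + (n−1)(t−1))·D_{r,n−1}(t) − (t−1)(t+r−1)·D'_{r,n−1}(t). -/

import Mathlib

open Finset Polynomial

/-- The group of colored permutations `G_{r,n} = Z_r ≀ S_n`, realized as bijections of the
colored alphabet `Σ = [n] × {0,…,r-1}` commuting with the color shift. -/
def ColoredPerm (r n : ℕ) [NeZero r] : Type :=
  {π : Equiv.Perm (Fin n × Fin r) //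
    ∀ x : Fin n × Fin r, π (x.1, x.2 + 1) = ((π x).1, (π x).2 + 1)}

/-- The color order on the colored alphabet:
`1^[r-1] < ⋯ < n^[r-1] < ⋯ < 1^[0] < ⋯ < n^[0]` (higher color is smaller). -/
def colorLt {r n : ℕ} (x y : Fin n × Fin r) : Prop :=
  y.2 < x.2 ∨ (x.2 = y.2 ∧ x.1 < y.1)

/-- The excedance number `exc` of a colored permutation. -/
noncomputable def cExc {r n : ℕ} [NeZero r] (π : ColoredPerm r n) : ℕ :=
  Nat.card {x : Fin n × Fin r // colorLt x (π.1 x)}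

/-- `exc_A(π) = |{i ∈ [n-1] : π(i) > i}|` (positions are the color-0 letters,
and `i ∈ [n-1]` corresponds to `i.val + 1 < n`). -/
noncomputable def cExcA {r n : ℕ} [NeZero r] (π : ColoredPerm r n) : ℕ :=
  Nat.card {i : Fin n // i.val + 1 < n ∧ colorLt (i, 0) (π.1 (i, 0))}

/-- `csum(π)`: the sum of the colors appearing in the window notation of `π`. -/
def csum {r n : ℕ} [NeZero r] (π : ColoredPerm r n) : ℕ :=
  ∑ i : Fin n, (π.1 (i, 0)).2.val

/-- `d(r,n,k)`: the number of colored permutations `π ∈ G_{r,n}` with `exc_A(π) = k`. -/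
noncomputable def dG (r n : ℕ) [NeZero r] (k : ℕ) : ℕ :=
  Nat.card {π : ColoredPerm r n // cExcA π = k}

/-- The generating polynomial `D_{r,n}(t) = Σ_{k=0}^{n} d(r,n,k) t^k` of `exc_A` over `G_{r,n}`. -/
noncomputable def Dpoly (r n : ℕ) [NeZero r] : Polynomial ℚ :=
  ∑ k ∈ Finset.range (n + 1), Polynomial.C ((dG r n k : ℚ)) * Polynomial.X ^ k

/-! ### Auxiliary machinery -/

section Aux

/-- number of excedances of a permutation of `Fin N`, as an indicator sum. -/
def pexc {N : ℕ} (σ : Equiv.Perm (Fin N)) : ℕ := ∑ i, if i < σ i then 1 else 0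
lemma pexc_le {N : ℕ} (σ : Equiv.Perm (Fin N)) : pexc σ ≤ N := by
  unfold pexc
  calc ∑ i : Fin N, (if i < σ i then 1 else 0) ≤ ∑ _i : Fin N, 1 := by
        apply Finset.sum_le_sum; intro i _; split <;> omega
    _ = N := by simp

lemma pexc_decompose_zero {m : ℕ} (e : Equiv.Perm (Fin m)) :
    pexc (Equiv.Perm.decomposeFin.symm (0, e)) = pexc e := by
  unfold pexc
  rw [Fin.sum_univ_succ]
  simp [Equiv.Perm.decomposeFin_symm_apply_zero, Equiv.Perm.decomposeFin_symm_apply_succ,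
    Fin.succ_lt_succ_iff]

lemma pexc_decompose_succ {m : ℕ} (e : Equiv.Perm (Fin m)) (q : Fin m) :
    pexc (Equiv.Perm.decomposeFin.symm (q.succ, e)) =
      if e.symm q < q then pexc e else pexc e + 1 := by
  have key : ∀ x : Fin m,
      (if x.succ < Equiv.Perm.decomposeFin.symm (q.succ, e) x.succ then (1:ℕ) else 0)
        = if e x = q then 0 else (if x < e x then 1 else 0) := by
    intro x
    rw [Equiv.Perm.decomposeFin_symm_apply_succ]
    rcases eq_or_ne (e x) q with h | h
    · rw [h, Equiv.swap_apply_right]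
      simp
    · rw [Equiv.swap_apply_of_ne_of_ne (Fin.succ_ne_zero _) (by simpa [Fin.succ_inj] using h)]
      simp [h, Fin.succ_lt_succ_iff]
  unfold pexc
  rw [Fin.sum_univ_succ]
  have h0 : (if (0 : Fin (m+1)) < Equiv.Perm.decomposeFin.symm (q.succ, e) 0 then (1:ℕ) else 0)
      = 1 := by
    rw [Equiv.Perm.decomposeFin_symm_apply_zero]
    simp [Fin.succ_pos]
  rw [h0]
  simp only [key]
  set x₀ := e.symm q with hx₀
  have hex₀ : e x₀ = q := by simp [hx₀]
  have hmem : x₀ ∈ (Finset.univ : Finset (Fin m)) := Finset.mem_univ _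
  have hG : (∑ x : Fin m, if e x = q then 0 else if x < e x then (1:ℕ) else 0)
      = ∑ x ∈ Finset.univ.erase x₀, if x < e x then (1:ℕ) else 0 := by
    rw [← Finset.sum_erase (f := fun x => if e x = q then 0 else if x < e x then (1:ℕ) else 0)
      Finset.univ (a := x₀) (by simp [hex₀])]
    apply Finset.sum_congr rfl
    intro x hx
    have hne : x ≠ x₀ := Finset.ne_of_mem_erase hx
    have : e x ≠ q := fun hc => hne (by simpa [hx₀] using congrArg e.symm hc)
    simp [this]
  have hh' := Finset.sum_erase_add Finset.univ
    (fun x => if x < e x then (1:ℕ) else 0) hmem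
  simp only [hex₀] at hh'
  rw [hG]
  rcases lt_or_ge x₀ q with hlt | hle
  · rw [if_pos hlt] at hh' ⊢
    omega
  · rw [if_neg (not_lt.mpr hle)] at hh' ⊢
    omega

lemma pexc_count {m : ℕ} (e : Equiv.Perm (Fin m)) :
    (Finset.univ.filter (fun q => e.symm q < q)).card = pexc e := by
  rw [Finset.card_filter]
  rw [← Equiv.sum_comp e (fun q => if e.symm q < q then (1:ℕ) else 0)]
  unfold pexc
  simp

lemma insertion_sum {M : Type*} [AddCommMonoid M] (m : ℕ) (F : ℕ → M) :
    ∑ σ : Equiv.Perm (Fin (m+1)), F (pexc σ)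
      = ∑ e : Equiv.Perm (Fin m),
          ((1 + pexc e) • F (pexc e) + (m - pexc e) • F (pexc e + 1)) := by
  rw [← Equiv.sum_comp (Equiv.Perm.decomposeFin.symm) (fun σ => F (pexc σ)), Fintype.sum_prod_type]
  rw [Finset.sum_comm]
  apply Finset.sum_congr rfl
  intro e _
  rw [Fin.sum_univ_succ]
  rw [pexc_decompose_zero]
  have key : ∀ q : Fin m, F (pexc (Equiv.Perm.decomposeFin.symm (q.succ, e)))
      = if e.symm q < q then F (pexc e) else F (pexc e + 1) := by
    intro q
    rw [pexc_decompose_succ, apply_ite F]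
  rw [Finset.sum_congr rfl (fun q _ => key q)]
  rw [Finset.sum_ite, Finset.sum_const, Finset.sum_const]
  have h1 : (Finset.univ.filter (fun q => e.symm q < q)).card = pexc e := pexc_count e
  have h2 : (Finset.univ.filter (fun q => ¬ e.symm q < q)).card = m - pexc e := by
    have h3 := Finset.card_filter_add_card_filter_not
      (s := (Finset.univ : Finset (Fin m))) (p := fun q => e.symm q < q)
    simp only [Finset.card_univ, Fintype.card_fin, h1] at h3
    omega
  rw [h1, h2, add_nsmul, one_nsmul]
  abel
instance (r n : ℕ) [NeZero r] : Fintype (ColoredPerm r n) := by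
  unfold ColoredPerm; infer_instance

def toColored (r n : ℕ) [NeZero r] (p : Equiv.Perm (Fin n) × (Fin n → Fin r)) :
    ColoredPerm r n :=
  ⟨{ toFun := fun x => (p.1 x.1, p.2 x.1 + x.2)
     invFun := fun y => (p.1.symm y.1, y.2 - p.2 (p.1.symm y.1))
     left_inv := by
       intro x
       simp
     right_inv := by
       intro y
       simp },
   by
     intro x
     simp [add_assoc]⟩

open Fin.NatCast in
lemma colored_apply {r n : ℕ} [NeZero r] (π : ColoredPerm r n) (i : Fin n) (j : Fin r) :
    π.1 (i, j) = ((π.1 (i, 0)).1, (π.1 (i, 0)).2 + j) := by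
  have key : ∀ t : ℕ, π.1 (i, (t : Fin r)) = ((π.1 (i, 0)).1, (π.1 (i, 0)).2 + (t : Fin r)) := by
    intro t
    induction t with
    | zero => simp
    | succ t ih =>
      have hc : ((t + 1 : ℕ) : Fin r) = (t : Fin r) + 1 := by push_cast; ring
      rw [hc]
      have := π.2 (i, (t : Fin r))
      simp only at this
      rw [this, ih]
      simp [add_assoc]
  have := key j.val
  simpa [Fin.cast_val_eq_self] using this

lemma toColored_bijective (r n : ℕ) [NeZero r] : Function.Bijective (toColored r n) := by
  constructor
  · rintro ⟨σ, c⟩ ⟨σ', c'⟩ h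
    have happ : ∀ i : Fin n, (σ i, c i + (0 : Fin r)) = (σ' i, c' i + (0 : Fin r)) := by
      intro i
      exact congrFun (congrArg (fun (π : ColoredPerm r n) => (π.1 : Fin n × Fin r → Fin n × Fin r))
        h) (i, 0)
    have hσ : σ = σ' := Equiv.ext fun i => congrArg Prod.fst (happ i)
    have hc : c = c' := funext fun i => by
      have := congrArg Prod.snd (happ i)
      simpa using this
    rw [Prod.ext_iff]; exact ⟨hσ, hc⟩
  · intro π
    set f : Fin n → Fin n := fun i => (π.1 (i, 0)).1 with hf
    have hinj : Function.Injective f := by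
      intro i i' hii
      set b := (π.1 (i, 0)).2 with hb
      set b' := (π.1 (i', 0)).2 with hb'
      have h1 : π.1 (i', b - b') = π.1 (i, 0) := by
        rw [colored_apply π i' (b - b')]
        have : (π.1 (i', 0)).2 + (b - b') = b := by
          rw [← hb', add_comm, sub_add_cancel]
        rw [this]
        have hfst : (π.1 (i', 0)).1 = (π.1 (i, 0)).1 := hii.symm
        rw [hfst, hb]
      have h2 := π.1.injective h1
      exact (congrArg Prod.fst h2).symm
    have hbij : Function.Bijective f := (Finite.injective_iff_bijective).mp hinj
    refine ⟨(Equiv.ofBijective f hbij, fun i => (π.1 (i, 0)).2), ?_⟩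
    apply Subtype.ext
    apply Equiv.ext
    rintro ⟨i, j⟩
    show (f i, (π.1 (i, 0)).2 + j) = π.1 (i, j)
    rw [colored_apply π i j]


lemma cExcA_toColored (r n : ℕ) [NeZero r] (p : Equiv.Perm (Fin n) × (Fin n → Fin r)) :
    cExcA (toColored r n p) = ∑ i : Fin n, if (i < p.1 i ∧ p.2 i = 0) then 1 else 0 := by
  classical
  obtain ⟨σ, c⟩ := p
  have happ : ∀ i : Fin n, (toColored r n (σ, c)).1 (i, 0) = (σ i, c i) := by
    intro i
    show (σ i, c i + 0) = (σ i, c i)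
    simp
  have hiff : ∀ i : Fin n,
      (i.val + 1 < n ∧ colorLt (i, 0) ((toColored r n (σ, c)).1 (i, 0)))
        ↔ (i < σ i ∧ c i = 0) := by
    intro i
    rw [happ i]
    unfold colorLt
    simp only
    constructor
    · rintro ⟨-, h | ⟨h1, h2⟩⟩
      · exact absurd h (by simp [Fin.lt_def])
      · exact ⟨h2, h1.symm⟩
    · rintro ⟨h1, h2⟩
      refine ⟨?_, Or.inr ⟨h2.symm, h1⟩⟩
      have := (σ i).isLt
      have := Fin.lt_iff_val_lt_val.mp h1
      omega
  unfold cExcA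
  rw [Nat.card_congr (Equiv.subtypeEquivRight hiff)]
  rw [Nat.card_eq_fintype_card, Fintype.card_subtype, Finset.card_filter]

lemma dG_eq (r n : ℕ) [NeZero r] (k : ℕ) :
    dG r n k = (Finset.univ.filter (fun π : ColoredPerm r n => cExcA π = k)).card := by
  classical
  unfold dG
  rw [Nat.card_eq_fintype_card, Fintype.card_subtype]

lemma cExcA_le (r n : ℕ) [NeZero r] (π : ColoredPerm r n) : cExcA π ≤ n := by
  classical
  unfold cExcA
  rw [Nat.card_eq_fintype_card]
  calc Fintype.card {i : Fin n // i.val + 1 < n ∧ colorLt (i, 0) (π.1 (i, 0))}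
      ≤ Fintype.card (Fin n) := Fintype.card_subtype_le _
    _ = n := Fintype.card_fin n

lemma Dpoly_eq_sum (r n : ℕ) [NeZero r] :
    Dpoly r n = ∑ π : ColoredPerm r n, (X : ℚ[X]) ^ cExcA π := by
  classical
  unfold Dpoly
  rw [← Finset.sum_fiberwise_of_maps_to
    (g := fun π : ColoredPerm r n => cExcA π) (t := Finset.range (n + 1))
    (fun π _ => Finset.mem_range.mpr (Nat.lt_succ_of_le (cExcA_le r n π)))
    (fun π => (X : ℚ[X]) ^ cExcA π)]
  apply Finset.sum_congr rfl
  intro k _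
  rw [dG_eq]
  rw [Finset.sum_congr rfl (fun π hπ => by
    rw [(Finset.mem_filter.mp hπ).2])]
  rw [Finset.sum_const, nsmul_eq_mul]
  simp

lemma sum_ite_zero_fin (r : ℕ) [NeZero r] :
    ∑ v : Fin r, (if v = 0 then (X : ℚ[X]) else 1) = X + (r : ℚ[X]) - 1 := by
  classical
  have : ∀ v : Fin r, (if v = 0 then (X : ℚ[X]) else 1)
      = (if v = 0 then (X - 1 : ℚ[X]) else 0) + 1 := by
    intro v; split <;> ring
  rw [Finset.sum_congr rfl (fun v _ => this v), Finset.sum_add_distrib]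
  rw [Finset.sum_ite_eq' Finset.univ (0 : Fin r) (fun _ => (X - 1 : ℚ[X]))]
  simp [Finset.card_univ]
  ring

lemma Dpoly_formula (r n : ℕ) [NeZero r] :
    Dpoly r n = ∑ σ : Equiv.Perm (Fin n),
      (X + (r : ℚ[X]) - 1) ^ pexc σ * (r : ℚ[X]) ^ (n - pexc σ) := by
  classical
  rw [Dpoly_eq_sum]
  rw [← Fintype.sum_bijective (toColored r n) (toColored_bijective r n) _ _ (fun p => rfl)]
  simp only [cExcA_toColored]
  rw [Fintype.sum_prod_type]
  apply Finset.sum_congr rfl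
  intro σ _
  -- inner sum over colorings
  have step1 : ∀ c : Fin n → Fin r,
      (X : ℚ[X]) ^ (∑ i : Fin n, if (i < σ i ∧ c i = 0) then 1 else 0)
        = ∏ i : Fin n, (if (i < σ i ∧ c i = 0) then (X : ℚ[X]) else 1) := by
    intro c
    rw [← Finset.prod_pow_eq_pow_sum]
    apply Finset.prod_congr rfl
    intro i _
    split <;> simp
  rw [Finset.sum_congr rfl (fun c _ => step1 c)]
  have hswap := Finset.prod_univ_sum (fun _ : Fin n => (Finset.univ : Finset (Fin r)))
    (fun i v => if (i < σ i ∧ v = 0) then (X : ℚ[X]) else 1)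
  rw [← Fintype.piFinset_univ, ← hswap]
  have step2 : ∀ i : Fin n,
      (∑ v : Fin r, if (i < σ i ∧ v = 0) then (X : ℚ[X]) else 1)
        = if i < σ i then (X + (r : ℚ[X]) - 1) else (r : ℚ[X]) := by
    intro i
    by_cases h : i < σ i
    · rw [if_pos h, ← sum_ite_zero_fin r]
      apply Finset.sum_congr rfl
      intro v _
      simp [h]
    · rw [if_neg h]
      have : ∀ v : Fin r, (if (i < σ i ∧ v = 0) then (X : ℚ[X]) else 1) = 1 := by
        intro v; simp [h]
      rw [Finset.sum_congr rfl (fun v _ => this v)]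
      simp [Finset.card_univ]
  rw [Finset.prod_congr rfl (fun i _ => step2 i)]
  rw [Finset.prod_ite (fun _ => (X + (r : ℚ[X]) - 1)) (fun _ => (r : ℚ[X]))]
  rw [Finset.prod_const, Finset.prod_const]
  congr 1
  · congr 1
    rw [Finset.card_filter]
    unfold pexc
    rfl
  · congr 1
    have h3 := Finset.card_filter_add_card_filter_not
      (s := (Finset.univ : Finset (Fin n))) (p := fun i => i < σ i)
    have h4 : (Finset.univ.filter (fun i => i < σ i)).card = pexc σ := by
      rw [Finset.card_filter]; rfl
    simp only [Finset.card_univ, Fintype.card_fin, h4] at h3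
    omega

end Aux

/-- For `n ≥ 1`, ... -/
theorem Dpoly_recursion (r n : ℕ) [NeZero r] (hn : 1 ≤ n) :
    Dpoly r n =
      (Polynomial.C ((r * n : ℕ) : ℚ) +
          Polynomial.C (((n - 1 : ℕ) : ℚ)) * (Polynomial.X - 1)) * Dpoly r (n - 1) -
        (Polynomial.X - 1) * (Polynomial.X + Polynomial.C (r : ℚ) - 1) *
          Polynomial.derivative (Dpoly r (n - 1)) := by
  obtain ⟨m, rfl⟩ : ∃ m, n = m + 1 := ⟨n - 1, by omega⟩
  have hm : m + 1 - 1 = m := by omega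
  rw [hm]
  rw [Dpoly_formula, Dpoly_formula]
  have hins := insertion_sum m
    (fun k => (X + (r : ℚ[X]) - 1) ^ k * (r : ℚ[X]) ^ (m + 1 - k))
  rw [hins]
  rw [derivative_sum, Finset.mul_sum, Finset.mul_sum, ← Finset.sum_sub_distrib]
  refine Finset.sum_congr rfl (fun e he => ?_)
  have hs : pexc e ≤ m := pexc_le e
  have h1 : m + 1 - pexc e = (m - pexc e) + 1 := by omega
  have h2 : m + 1 - (pexc e + 1) = m - pexc e := by omega
  rw [h1, h2]
  set s := pexc e with hsdef
  clear_value s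
  set dd := m - s with hdd
  clear_value dd
  have hmsd : m = s + dd := by omega
  clear hdd hs h1 h2 hins hsdef hm hn
  clear he e
  subst hmsd
  simp only [derivative_mul, derivative_pow, derivative_X, derivative_one, derivative_sub,
    derivative_add, derivative_natCast, Polynomial.C_eq_natCast, nsmul_eq_mul,
    mul_zero, zero_mul, add_zero, zero_add, mul_one]
  rcases s with _ | t
  · simp
    ring
  · simp only [Nat.add_sub_cancel]
    push_cast
    ring
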